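/- Every coordinatewise monotone function f : [0,1]^n → ℝ∪{±∞} is Lebesgue measurable. -/
import Mathlib


open MeasureTheory Set

private lemma mono_on_cube (n : ℕ) (f : (Fin n → ℝ) → EReal)
    (hmono : ∀ x ∈ Set.Icc (0 : Fin n → ℝ) 1, ∀ (i : Fin n) (h : ℝ), 0 ≤ h →
      x + h • (Pi.single i 1 : Fin n → ℝ) ∈ Set.Icc (0 : Fin n → ℝ) 1 →
      f x ≤ f (x + h • (Pi.single i 1 : Fin n → ℝ)))
    {x y : Fin n → ℝ} (hx : x ∈ Set.Icc (0 : Fin n → ℝ) 1)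
    (hy : y ∈ Set.Icc (0 : Fin n → ℝ) 1) (hxy : x ≤ y) : f x ≤ f y := by
  classical
  have key : ∀ s : Finset (Fin n),
      s.piecewise y x ∈ Set.Icc (0 : Fin n → ℝ) 1 ∧ f x ≤ f (s.piecewise y x) := by
    intro s
    induction s using Finset.induction_on with
    | empty => rw [Finset.piecewise_empty]; exact ⟨hx, le_rfl⟩
    | @insert j s hj ih =>
      have heq : (insert j s).piecewise y x
          = s.piecewise y x + (y j - x j) • (Pi.single j 1 : Fin n → ℝ) := by
        funext i
        by_cases hij : i = j
        · subst hij
          simp [Finset.piecewise_insert, Finset.piecewise_eq_of_notMem _ _ _ hj]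
        · simp [Finset.piecewise_insert, Function.update_of_ne hij,
            Pi.single_eq_of_ne hij]
      have hmem : (insert j s).piecewise y x ∈ Set.Icc (0 : Fin n → ℝ) 1 := by
        constructor <;> intro i <;> by_cases his : i ∈ insert j s
        · simpa [Finset.piecewise_eq_of_mem _ _ _ his] using hy.1 i
        · simpa [Finset.piecewise_eq_of_notMem _ _ _ his] using hx.1 i
        · simpa [Finset.piecewise_eq_of_mem _ _ _ his] using hy.2 i
        · simpa [Finset.piecewise_eq_of_notMem _ _ _ his] using hx.2 i
      refine ⟨hmem, ih.2.trans ?_⟩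
      rw [heq]
      exact hmono _ ih.1 j (y j - x j) (sub_nonneg.2 (hxy j)) (heq ▸ hmem)
  have := (key Finset.univ).2
  simpa using this

/-- Every coordinatewise monotone function `f : [0,1]^n → ℝ ∪ {±∞}` is Lebesgue
measurable (i.e. measurable with respect to the completed Lebesgue measure restricted
to the unit cube). -/
theorem coordinatewise_monotone_lebesgue_measurable
    (n : ℕ) (f : (Fin n → ℝ) → EReal)
    (hmono : ∀ x ∈ Set.Icc (0 : Fin n → ℝ) 1, ∀ (i : Fin n) (h : ℝ), 0 ≤ h →
      x + h • (Pi.single i 1 : Fin n → ℝ) ∈ Set.Icc (0 : Fin n → ℝ) 1 →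
      f x ≤ f (x + h • (Pi.single i 1 : Fin n → ℝ))) :
    NullMeasurable f (volume.restrict (Set.Icc (0 : Fin n → ℝ) 1)) := by
  have H : ∀ a : EReal, NullMeasurableSet (f ⁻¹' Set.Ioi a)
      (volume.restrict (Set.Icc (0 : Fin n → ℝ) 1)) := by
    intro a
    set Q : Set (Fin n → ℝ) := Set.Icc (0 : Fin n → ℝ) 1 with hQ
    set U : Set (Fin n → ℝ) := {z | ∃ w, w ∈ f ⁻¹' Set.Ioi a ∩ Q ∧ w ≤ z} with hU
    have hUpper : IsUpperSet U := by
      intro z z' hzz' ⟨w, hw, hwz⟩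
      exact ⟨w, hw, hwz.trans hzz'⟩
    have hUQ : U ∩ Q = f ⁻¹' Set.Ioi a ∩ Q := by
      ext z
      constructor
      · rintro ⟨⟨w, ⟨hwf, hwQ⟩, hwz⟩, hzQ⟩
        exact ⟨lt_of_lt_of_le hwf (mono_on_cube n f hmono hwQ hzQ hwz), hzQ⟩
      · rintro ⟨hzf, hzQ⟩
        exact ⟨⟨z, ⟨hzf, hzQ⟩, le_rfl⟩, hzQ⟩
    have hUnm : NullMeasurableSet (U ∩ Q) volume :=
      (nullMeasurableSet_of_null_frontier hUpper.null_frontier).inter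
        measurableSet_Icc.nullMeasurableSet
    have hUnm' : NullMeasurableSet (U ∩ Q) (volume.restrict Q) :=
      hUnm.mono_ac (Measure.absolutelyContinuous_of_le Measure.restrict_le_self)
    refine hUnm'.congr (Filter.eventuallyEq_set.2 ?_)
    filter_upwards [ae_restrict_mem (measurableSet_Icc : MeasurableSet Q)] with z hz
    have h1 : z ∈ U ∩ Q ↔ z ∈ f ⁻¹' Set.Ioi a ∩ Q := Set.ext_iff.1 hUQ z
    simp only [Set.mem_inter_iff, hz, and_true] at h1 ⊢
    exact h1
  exact measurable_of_Ioi (δ := NullMeasurableSpace (Fin n → ℝ)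
    (volume.restrict (Set.Icc (0 : Fin n → ℝ) 1))) H
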